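/- Let n ≥ 1, let w ∈ Sₙ be an involution, and let π, σ ∈ Sₙ. Then (−1)^{inv_w(πσ)} = (−1)^{inv_w(σ)} · (−1)^{inv_{σwσ⁻¹}(π)} (note that σwσ⁻¹ is again an involution). Equivalently, inv_w(πσ) ≡ inv_w(σ) + inv_{σwσ⁻¹}(π) (mod 2). -/

import Mathlib

open Equiv

/-- The set of involutions in `Sₙ` (elements `w` with `w² = id`). -/
abbrev SymInv (n : ℕ) : Type := {w : Equiv.Perm (Fin n) // w * w = 1}

/-- `inv_w(π) = |Inv(π) ∩ Pair(w)|`. -/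
noncomputable def invw (n : ℕ) (w π : Equiv.Perm (Fin n)) : ℕ :=
  {p : Fin n × Fin n | p.1 < p.2 ∧ w p.1 = p.2 ∧ π p.2 < π p.1}.ncard

lemma invw_eq_card (n : ℕ) (w τ : Equiv.Perm (Fin n)) :
    invw n w τ = (Finset.univ.filter
      (fun p : Fin n × Fin n => p.1 < p.2 ∧ w p.1 = p.2 ∧ τ p.2 < τ p.1)).card := by
  rw [invw, ← Set.ncard_coe_finset]
  congr 1
  ext p
  simp

theorem sign_cocycle (n : ℕ) (hn : 1 ≤ n) (w : Equiv.Perm (Fin n)) (hw : w * w = 1)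
    (π σ : Equiv.Perm (Fin n)) :
    ((-1 : ℤ)) ^ invw n w (π * σ) =
      (-1 : ℤ) ^ invw n w σ * (-1 : ℤ) ^ invw n (σ * w * σ⁻¹) π := by
  have hwinv : ∀ i, w (w i) = i := fun i => by
    have := congrArg (fun f => f i) hw; simpa using this
  set w' := σ * w * σ⁻¹ with hw'
  have hw'app : ∀ i, w' (σ i) = σ (w i) := fun i => by
    simp [hw', Equiv.Perm.mul_apply]
  -- parity identity in ZMod 2
  have key : ((invw n w (π * σ) : ZMod 2)) =
      (invw n w σ : ZMod 2) + (invw n w' π : ZMod 2) := by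
    have card_eq : ∀ τ : Equiv.Perm (Fin n), ∀ v : Equiv.Perm (Fin n),
        ((invw n v τ : ZMod 2)) = ∑ p ∈ Finset.univ.filter
          (fun p : Fin n × Fin n => p.1 < p.2 ∧ v p.1 = p.2),
          (if τ p.2 < τ p.1 then (1 : ZMod 2) else 0) := by
      intro τ v
      rw [invw_eq_card]
      push_cast
      rw [Finset.card_filter]
      push_cast
      rw [Finset.sum_filter]
      congr 1
      ext p
      by_cases h1 : p.1 < p.2 ∧ v p.1 = p.2 <;> by_cases h2 : τ p.2 < τ p.1 <;>
        simp [h1, h2, and_assoc]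
    rw [card_eq (π * σ) w, card_eq σ w, card_eq π w']
    -- reindex the w' sum over pairs of w
    have reindex : (∑ p ∈ Finset.univ.filter
          (fun p : Fin n × Fin n => p.1 < p.2 ∧ w' p.1 = p.2),
          (if π p.2 < π p.1 then (1 : ZMod 2) else 0)) =
        ∑ p ∈ Finset.univ.filter
          (fun p : Fin n × Fin n => p.1 < p.2 ∧ w p.1 = p.2),
          (if σ p.1 < σ p.2 then (if π (σ p.2) < π (σ p.1) then (1 : ZMod 2) else 0)
            else (if π (σ p.1) < π (σ p.2) then (1 : ZMod 2) else 0)) := by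
      refine (Finset.sum_nbij'
        (i := fun q : Fin n × Fin n => if σ⁻¹ q.1 < σ⁻¹ q.2 then (σ⁻¹ q.1, σ⁻¹ q.2) else (σ⁻¹ q.2, σ⁻¹ q.1))
        (j := fun p : Fin n × Fin n => if σ p.1 < σ p.2 then (σ p.1, σ p.2) else (σ p.2, σ p.1))
        ?_ ?_ ?_ ?_ ?_)
      · intro q hq
        simp only [Finset.mem_filter, Finset.mem_univ, true_and] at hq ⊢
        obtain ⟨hlt, heq⟩ := hq
        have hne : σ⁻¹ q.1 ≠ σ⁻¹ q.2 := by
          intro h; exact absurd (σ⁻¹.injective h ▸ rfl : q.1 = q.2) hlt.ne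
        have hw2 : w (σ⁻¹ q.1) = σ⁻¹ q.2 := by
          have := hw'app (σ⁻¹ q.1)
          simp only [Equiv.apply_symm_apply, Perm.inv_def] at this ⊢
          rw [heq] at this
          exact σ.injective (by simpa using this.symm)
        have hw3 : w (σ⁻¹ q.2) = σ⁻¹ q.1 := by rw [← hw2, hwinv]
        rcases lt_or_gt_of_ne hne with h | h
        · simp only [Perm.inv_def] at h hw2; simp [h, hw2]
        · simp only [Perm.inv_def] at h hw3; simp [not_lt.mpr h.le, h, hw3]
      · intro p hp
        simp only [Finset.mem_filter, Finset.mem_univ, true_and] at hp ⊢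
        obtain ⟨hlt, heq⟩ := hp
        have hne : σ p.1 ≠ σ p.2 := fun h => absurd (σ.injective h) hlt.ne
        have h1 : w' (σ p.1) = σ p.2 := by rw [hw'app, heq]
        have h2 : w' (σ p.2) = σ p.1 := by rw [hw'app, ← heq, hwinv]
        rcases lt_or_gt_of_ne hne with h | h
        · simp [h, h1]
        · simp [not_lt.mpr h.le, h, h2]
      · intro q hq
        simp only [Finset.mem_filter, Finset.mem_univ, true_and] at hq
        rcases lt_or_gt_of_ne (show σ⁻¹ q.1 ≠ σ⁻¹ q.2 from fun h =>
          absurd (σ⁻¹.injective h ▸ rfl : q.1 = q.2) hq.1.ne) with h | h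
        · simp only [Perm.inv_def] at h; simp [h, hq.1]
        · simp only [Perm.inv_def] at h; simp [not_lt.mpr h.le, not_lt.mpr hq.1.le]
      · intro p hp
        simp only [Finset.mem_filter, Finset.mem_univ, true_and] at hp
        rcases lt_or_gt_of_ne (show σ p.1 ≠ σ p.2 from fun h =>
          absurd (σ.injective h) hp.1.ne) with h | h
        · simp [h, hp.1]
        · simp [not_lt.mpr h.le, not_lt.mpr hp.1.le]
      · intro q hq
        simp only [Finset.mem_filter, Finset.mem_univ, true_and] at hq
        rcases lt_or_gt_of_ne (show σ⁻¹ q.1 ≠ σ⁻¹ q.2 from fun h =>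
          absurd (σ⁻¹.injective h ▸ rfl : q.1 = q.2) hq.1.ne) with h | h
        · simp only [Perm.inv_def] at h; simp [h, hq.1]
        · simp only [Perm.inv_def] at h; simp [not_lt.mpr h.le, h, not_lt.mpr hq.1.le]
    rw [reindex, ← Finset.sum_add_distrib]
    refine Finset.sum_congr rfl ?_
    intro p hp
    simp only [Finset.mem_filter, Finset.mem_univ, true_and] at hp
    have hne : σ p.1 ≠ σ p.2 := fun h => absurd (σ.injective h) hp.1.ne
    simp only [Equiv.Perm.mul_apply]
    rcases lt_or_gt_of_ne hne with h | h
    · simp [h, not_lt.mpr h.le]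
      exact if_congr Iff.rfl rfl rfl
    · have hπne : π (σ p.1) ≠ π (σ p.2) := fun hh => absurd (π.injective hh) hne
      have h11 : (1 : ZMod 2) + 1 = 0 := by decide
      rcases lt_or_gt_of_ne hπne with h2 | h2
      · simp [not_lt.mpr h.le, h, h2, not_lt.mpr h2.le, h11]
      · simp [not_lt.mpr h.le, h, h2, not_lt.mpr h2.le, h11]
  -- convert parity to signs
  have hmod : invw n w (π * σ) % 2 = (invw n w σ + invw n w' π) % 2 := by
    exact (ZMod.natCast_eq_natCast_iff _ _ 2).mp (by rw [Nat.cast_add]; exact key)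
  calc (-1 : ℤ) ^ invw n w (π * σ)
      = (-1 : ℤ) ^ (invw n w (π * σ) % 2) := by rw [← neg_one_pow_eq_pow_mod_two]
    _ = (-1 : ℤ) ^ ((invw n w σ + invw n w' π) % 2) := by rw [hmod]
    _ = (-1 : ℤ) ^ (invw n w σ + invw n w' π) := by rw [← neg_one_pow_eq_pow_mod_two]
    _ = _ := by rw [pow_add]
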